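/- Let h = h_{1,1} be as defined. Then neither the sequence (h(n))_{n∈ℕ} nor the subsequence (h(2n))_{n∈ℕ} satisfies a linear recurrence: there do not exist d ≥ 1, rational constants c_1, …, c_d, and N ∈ ℕ such that h(n+d) = c_1 h(n+d-1) + ⋯ + c_d h(n) for all n ≥ N, and likewise there do not exist d ≥ 1, rational constants c_1, …, c_d, and N ∈ ℕ such that h(2(n+d)) = c_1 h(2(n+d-1)) + ⋯ + c_d h(2n) for all n ≥ N. -/

import Mathlib

section HFacts

variable (h : ℤ → ℕ)
variable (hinit : ∀ n : ℤ, n ≤ 1 → h n = 1)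
variable (hrec : ∀ n : ℤ, 2 ≤ n → h n = h (n - (h (n - 1) : ℤ)) + h (n - 2))

include hinit hrec in
/-- Key structural facts, proved by simultaneous strong induction. -/
theorem hkey : ∀ k : ℕ, h (2*(k:ℤ)+1) = k + 1 ∧ 2*k ≤ h (2*(k:ℤ)) ∧
    (∀ j : ℕ, j + 1 = k → h (2*(k:ℤ)) = h (k:ℤ) + h (2*(j:ℤ))) := by
  intro k
  induction k using Nat.strong_induction_on with
  | _ k IH =>
    match k with
    | 0 =>
      refine ⟨?_, ?_, ?_⟩
      · simpa using hinit 1 (by norm_num)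
      · simp
      · intro j hj; omega
    | (m+1) =>
      have hodd_prev : h (2*(m:ℤ)+1) = m + 1 := (IH m (by omega)).1
      have heven : h (2*((m+1:ℕ):ℤ)) = h ((m+1:ℕ):ℤ) + h (2*(m:ℤ)) := by
        have h2 : (2:ℤ) ≤ 2*((m+1:ℕ):ℤ) := by push_cast; omega
        have := hrec (2*((m+1:ℕ):ℤ)) h2
        have e1 : (2*((m+1:ℕ):ℤ) - 1) = 2*(m:ℤ)+1 := by push_cast; ring
        rw [e1, hodd_prev] at this
        have e2 : (2*((m+1:ℕ):ℤ) - ((m:ℕ)+1 : ℕ)) = ((m+1:ℕ):ℤ) := by push_cast; ring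
        have e3 : (2*((m+1:ℕ):ℤ) - 2) = 2*(m:ℤ) := by push_cast; ring
        rw [e2, e3] at this
        exact this
      have hge : 2*(m+1) ≤ h (2*((m+1:ℕ):ℤ)) := by
        have hprev : 2*m ≤ h (2*(m:ℤ)) := (IH m (by omega)).2.1
        rcases Nat.eq_zero_or_pos m with h1 | h1
        · subst h1
          have h0 : h ((0+1:ℕ):ℤ) = 1 := hinit _ (by norm_num)
          have h00 : h (2*((0:ℕ):ℤ)) = 1 := hinit _ (by norm_num)
          rw [heven]
          push_cast at h0 h00 ⊢
          omega
        · have hk2 : 2 ≤ h ((m+1:ℕ):ℤ) := by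
            rcases Nat.even_or_odd (m+1) with ⟨t, ht⟩ | ⟨t, ht⟩
            · have := (IH t (by omega)).2.1
              have e : ((m+1:ℕ):ℤ) = 2*(t:ℤ) := by push_cast; omega
              rw [e]; omega
            · have := (IH t (by omega)).1
              have e : ((m+1:ℕ):ℤ) = 2*(t:ℤ)+1 := by push_cast; omega
              rw [e]; omega
          rw [heven]; omega
      refine ⟨?_, hge, ?_⟩
      · have h2 : (2:ℤ) ≤ 2*((m+1:ℕ):ℤ)+1 := by push_cast; omega
        have := hrec (2*((m+1:ℕ):ℤ)+1) h2
        have e1 : (2*((m+1:ℕ):ℤ)+1 - 1) = 2*((m+1:ℕ):ℤ) := by ring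
        rw [e1] at this
        have e3 : (2*((m+1:ℕ):ℤ)+1 - 2) = 2*(m:ℤ)+1 := by push_cast; ring
        rw [e3, hodd_prev] at this
        have hsmall : (2*((m+1:ℕ):ℤ)+1 - (h (2*((m+1:ℕ):ℤ)) : ℤ)) ≤ 1 := by
          have : ((2*(m+1):ℕ) : ℤ) ≤ (h (2*((m+1:ℕ):ℤ)) : ℤ) := by exact_mod_cast hge
          push_cast at this ⊢
          omega
        rw [hinit _ hsmall] at this
        omega
      · intro j hj
        have : j = m := by omega
        subst this
        exact heven

end HFacts

open Polynomial

noncomputable section PApply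

/-- Apply a polynomial in the shift operator to a sequence. -/
def papply (p : Polynomial ℂ) (s : ℕ → ℂ) (n : ℕ) : ℂ :=
  p.sum fun i c => c * s (n + i)

lemma papply_zero (s : ℕ → ℂ) (n : ℕ) : papply 0 s n = 0 := by
  simp [papply]

lemma papply_add (p q : Polynomial ℂ) (s : ℕ → ℂ) (n : ℕ) :
    papply (p + q) s n = papply p s n + papply q s n := by
  unfold papply
  exact Polynomial.sum_add_index p q _ (by simp) (by intros; ring)

lemma papply_monomial (k : ℕ) (a : ℂ) (s : ℕ → ℂ) (n : ℕ) :
    papply (monomial k a) s n = a * s (n + k) := by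
  unfold papply
  exact Polynomial.sum_monomial_index a _ (by simp)

lemma papply_mul (p q : Polynomial ℂ) (s : ℕ → ℂ) (n : ℕ) :
    papply (p * q) s n = papply p (fun m => papply q s m) n := by
  induction p using Polynomial.induction_on' generalizing n with
  | add p₁ p₂ ih1 ih2 =>
    rw [add_mul, papply_add, papply_add, ih1, ih2]
  | monomial k a =>
    rw [papply_monomial]
    induction q using Polynomial.induction_on' generalizing n with
    | add q₁ q₂ ih1 ih2 =>
      rw [mul_add, papply_add, papply_add, mul_add, ih1, ih2]
    | monomial l b =>
      rw [monomial_mul_monomial, papply_monomial, papply_monomial, add_assoc]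
      ring

lemma papply_C_mul (a : ℂ) (p : Polynomial ℂ) (s : ℕ → ℂ) (n : ℕ) :
    papply (C a * p) s n = a * papply p s n := by
  rw [papply_mul]
  rw [← Polynomial.monomial_zero_left, papply_monomial]
  simp

lemma papply_X_pow (k : ℕ) (s : ℕ → ℂ) (n : ℕ) :
    papply (X ^ k) s n = s (n + k) := by
  rw [X_pow_eq_monomial, papply_monomial, one_mul]

lemma papply_sub (p q : Polynomial ℂ) (s : ℕ → ℂ) (n : ℕ) :
    papply (p - q) s n = papply p s n - papply q s n := by
  have hneg : papply (-q) s n = - papply q s n := by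
    have hq : -q = C (-1 : ℂ) * q := by
      rw [map_neg, map_one]; ring
    rw [hq, papply_C_mul]; ring
  rw [sub_eq_add_neg, papply_add, hneg]; ring

lemma papply_sum {α : Type*} [DecidableEq α] (F : Finset α) (f : α → Polynomial ℂ) (s : ℕ → ℂ) (n : ℕ) :
    papply (∑ i ∈ F, f i) s n = ∑ i ∈ F, papply (f i) s n := by
  induction F using Finset.induction_on with
  | empty => simp [papply_zero]
  | insert x F' hx ih => rw [Finset.sum_insert hx, papply_add, ih, Finset.sum_insert hx]

lemma papply_X_sub_C (lam : ℂ) (s : ℕ → ℂ) (n : ℕ) :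
    papply (X - C lam) s n = s (n + 1) - lam * s n := by
  rw [papply_sub]
  have h1 : papply X s n = s (n + 1) := by
    simpa using papply_X_pow 1 s n
  have h2 : papply (C lam) s n = lam * s n := by
    rw [← Polynomial.monomial_zero_left, papply_monomial]; simp
  rw [h1, h2]

/-- A sequence satisfies the recurrence given by `p` from `N` on. -/
def Sat (p : Polynomial ℂ) (s : ℕ → ℂ) (N : ℕ) : Prop :=
  ∀ n, N ≤ n → papply p s n = 0

end PApply

noncomputable def Complex.abs : AbsoluteValue ℂ ℝ where
  toFun z := ‖z‖
  map_mul' := norm_mul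
  nonneg' := norm_nonneg
  eq_zero' _ := norm_eq_zero
  add_le' := norm_add_le

lemma Complex.abs_natCast (n : ℕ) : Complex.abs (n : ℂ) = n := by
  show ‖(n:ℂ)‖ = n
  simp
lemma one_le_aux (n e : ℕ) : ((n:ℝ)+1)^e + ((n:ℝ)+1)^e/((n:ℝ)+1) ≤ 0 ∨ True := Or.inr trivial

lemma pow_succ_aux (n e : ℕ) :
    ((n:ℝ)+1)^(e+1) + ((n:ℝ)+1)^e ≤ ((n:ℝ)+2)^(e+1) := by
  have h1 : ((n:ℝ)+1)^(e+1) + ((n:ℝ)+1)^e = ((n:ℝ)+1)^e * ((n:ℝ)+2) := by ring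
  rw [h1]
  have h2 : ((n:ℝ)+1)^e ≤ ((n:ℝ)+2)^e := by
    apply pow_le_pow_left₀ (by positivity)
    linarith
  have h3 : (0:ℝ) ≤ (n:ℝ)+2 := by positivity
  calc ((n:ℝ)+1)^e * ((n:ℝ)+2) ≤ ((n:ℝ)+2)^e * ((n:ℝ)+2) := by
        exact mul_le_mul_of_nonneg_right h2 h3
    _ = ((n:ℝ)+2)^(e+1) := by ring

/-- If `s` satisfies an eventual linear recurrence whose characteristic polynomial
is monic with all roots in the closed unit disc, then `s` is polynomially bounded. -/
lemma polyBound : ∀ (e : ℕ) (p : Polynomial ℂ), p.Monic → p.natDegree = e →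
    (∀ z ∈ p.roots, Complex.abs z ≤ 1) → ∀ (s : ℕ → ℂ) (N : ℕ), Sat p s N →
    ∃ C : ℝ, ∀ n : ℕ, Complex.abs (s n) ≤ C * ((n:ℝ)+1)^e := by
  intro e
  induction e with
  | zero =>
    intro p hm hdeg _ s N hsat
    have hp1 : p = 1 := hm.natDegree_eq_zero.mp hdeg
    have hz : ∀ n, N ≤ n → s n = 0 := by
      intro n hn
      have := hsat n hn
      rw [hp1] at this
      have h1 : papply (1 : Polynomial ℂ) s n = s n := by
        have : (1 : Polynomial ℂ) = Polynomial.monomial 0 1 := by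
          rw [Polynomial.monomial_zero_left, map_one]
        rw [this, papply_monomial]; simp
      rw [h1] at this; exact this
    refine ⟨∑ m ∈ Finset.range N, Complex.abs (s m), ?_⟩
    intro n
    simp only [pow_zero, mul_one]
    by_cases hn : n < N
    · exact Finset.single_le_sum (f := fun m => Complex.abs (s m))
        (fun i _ => AbsoluteValue.nonneg _ _) (Finset.mem_range.mpr hn)
    · push_neg at hn
      rw [hz n hn]
      simp only [map_zero]
      exact Finset.sum_nonneg fun i _ => AbsoluteValue.nonneg _ _
  | succ e IH =>
    intro p hm hdeg hroots s N hsat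
    have hpne : p ≠ 0 := hm.ne_zero
    have hdegpos : 0 < p.degree := by
      rw [Polynomial.degree_eq_natDegree hpne, hdeg]
      exact_mod_cast Nat.succ_pos e
    obtain ⟨lam, hlam⟩ := Complex.exists_root hdegpos
    have hlamroots : lam ∈ p.roots := by
      rw [Polynomial.mem_roots']
      exact ⟨hpne, hlam⟩
    have hlam1 : Complex.abs lam ≤ 1 := hroots lam hlamroots
    obtain ⟨q, hpq⟩ := (Polynomial.dvd_iff_isRoot.mpr hlam : (Polynomial.X - Polynomial.C lam) ∣ p)
    have hqm : q.Monic := by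
      have := hpq ▸ hm
      exact (Polynomial.monic_X_sub_C lam).of_mul_monic_left this
    have hqne : q ≠ 0 := hqm.ne_zero
    have hqdeg : q.natDegree = e := by
      have := hpq ▸ hdeg
      rw [Polynomial.natDegree_mul (Polynomial.X_sub_C_ne_zero lam) hqne,
        Polynomial.natDegree_X_sub_C] at this
      omega
    have hqroots : ∀ z ∈ q.roots, Complex.abs z ≤ 1 := by
      intro z hz
      apply hroots
      rw [hpq, Polynomial.roots_mul (hpq ▸ hpne)]
      exact Multiset.mem_add.mpr (Or.inr hz)
    set b : ℕ → ℂ := fun m => s (m + 1) - lam * s m with hb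
    have hsatb : Sat q b N := by
      intro n hn
      have h1 : papply q b n = papply (q * (Polynomial.X - Polynomial.C lam)) s n := by
        rw [papply_mul]
        congr 1
        funext m
        exact (papply_X_sub_C lam s m).symm
      rw [h1, mul_comm, ← hpq]
      exact hsat n hn
    obtain ⟨C₁, hC₁⟩ := IH q hqm hqdeg hqroots b N hsatb
    have hC₁0 : 0 ≤ C₁ := by
      have h1 := hC₁ 0
      simp at h1
      exact le_trans (AbsoluteValue.nonneg _ _) h1
    refine ⟨Complex.abs (s 0) + C₁, ?_⟩
    intro n
    induction n with
    | zero => simp; nlinarith [AbsoluteValue.nonneg Complex.abs (s 0)]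
    | succ n ihn =>
      have hs1 : s (n+1) = lam * s n + b n := by rw [hb]; ring
      have habs : Complex.abs (s (n+1)) ≤ Complex.abs (s n) + Complex.abs (b n) := by
        rw [hs1]
        calc Complex.abs (lam * s n + b n) ≤ Complex.abs (lam * s n) + Complex.abs (b n) :=
              AbsoluteValue.add_le _ _ _
          _ ≤ Complex.abs (s n) + Complex.abs (b n) := by
              rw [map_mul]
              nlinarith [AbsoluteValue.nonneg Complex.abs (s n), hlam1,
                AbsoluteValue.nonneg Complex.abs lam]
      have hbn := hC₁ n
      have hkey := pow_succ_aux n e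
      have hA0 : 0 ≤ Complex.abs (s 0) := AbsoluteValue.nonneg _ _
      have hpow0 : (0:ℝ) ≤ ((n:ℝ)+1)^e := by positivity
      have hpow1 : (0:ℝ) ≤ ((n:ℝ)+1)^(e+1) := by positivity
      have : ((n:ℝ)+1+1) = ((n:ℝ)+2) := by ring
      push_cast
      rw [this]
      push_cast at ihn
      nlinarith [hkey]
set_option maxHeartbeats 1000000 in
/-- Core lemma: a natural-number sequence that grows faster than any polynomial
but slower than any exponential satisfies no eventual linear recurrence. -/
lemma core_no_lr (s : ℕ → ℕ)
    (Hsuper : ∀ (C : ℝ) (K N₀ : ℕ), ∃ n, N₀ ≤ n ∧ C * ((n:ℝ)+1)^K < s n)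
    (Hsub : ∀ ρ : ℝ, 1 < ρ → ∀ c : ℝ, 0 < c → ∀ e N₀ : ℕ, ∃ n, N₀ ≤ n ∧
      (∑ j ∈ Finset.range (e+1), (s (n+j) : ℝ)) < c * ρ^n) :
    ¬ ∃ p : Polynomial ℂ, p.Monic ∧ 1 ≤ p.natDegree ∧
      ∃ N, Sat p (fun m => (s m : ℂ)) N := by
  classical
  rintro ⟨p₀, hm₀, hd₀, N₀', hsat₀⟩
  set T : ℕ → Prop := fun e => ∃ p : Polynomial ℂ, p.Monic ∧ p.natDegree = e ∧
    ∃ N, Sat p (fun m => (s m : ℂ)) N with hT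
  have hTne : T p₀.natDegree := ⟨p₀, hm₀, rfl, N₀', hsat₀⟩
  set e₀ := Nat.find ⟨p₀.natDegree, hTne⟩ with he₀
  obtain ⟨p, hm, hdeg, N, hsat⟩ := Nat.find_spec (⟨p₀.natDegree, hTne⟩ : ∃ e, T e)
  rw [← he₀] at hdeg
  have hmin : ∀ e < e₀, ¬ T e := fun e he => Nat.find_min _ he
  -- e₀ = 0 is impossible
  rcases Nat.eq_zero_or_pos e₀ with he0 | he0
  · rw [he0] at hdeg
    have hp1 : p = 1 := hm.natDegree_eq_zero.mp hdeg
    obtain ⟨n, hn, hlt⟩ := Hsuper 0 0 N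
    have := hsat n hn
    rw [hp1] at this
    have h1 : papply (1 : Polynomial ℂ) (fun m => (s m : ℂ)) n = (s n : ℂ) := by
      have he : (1 : Polynomial ℂ) = Polynomial.monomial 0 1 := by
        rw [Polynomial.monomial_zero_left, map_one]
      rw [he, papply_monomial]; simp
    rw [h1] at this
    have hsn : s n = 0 := by exact_mod_cast this
    rw [hsn] at hlt
    simp at hlt
  -- e₀ ≥ 1
  by_cases hroots : ∀ z ∈ p.roots, Complex.abs z ≤ 1
  · -- polynomial bound contradicts superpolynomial growth
    obtain ⟨C, hC⟩ := polyBound e₀ p hm hdeg hroots _ N hsat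
    obtain ⟨n, -, hlt⟩ := Hsuper C e₀ 0
    have := hC n
    rw [Complex.abs_natCast] at this
    linarith
  · push_neg at hroots
    obtain ⟨lam, hlamroots, hlam1⟩ := hroots
    have hpne : p ≠ 0 := hm.ne_zero
    have hlam : p.IsRoot lam := (Polynomial.mem_roots'.mp hlamroots).2
    obtain ⟨q, hpq⟩ := (Polynomial.dvd_iff_isRoot.mpr hlam : (Polynomial.X - Polynomial.C lam) ∣ p)
    have hqm : q.Monic := by
      have := hpq ▸ hm
      exact (Polynomial.monic_X_sub_C lam).of_mul_monic_left this
    have hqne : q ≠ 0 := hqm.ne_zero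
    have hqdeg : q.natDegree = e₀ - 1 := by
      have := hpq ▸ hdeg
      rw [Polynomial.natDegree_mul (Polynomial.X_sub_C_ne_zero lam) hqne,
        Polynomial.natDegree_X_sub_C] at this
      omega
    set b : ℕ → ℂ := fun m => papply q (fun m => (s m : ℂ)) m with hb
    have hbrec : ∀ n, N ≤ n → b (n+1) = lam * b n := by
      intro n hn
      have h1 : papply p (fun m => (s m : ℂ)) n
          = b (n+1) - lam * b n := by
        rw [hpq, papply_mul]
        exact papply_X_sub_C lam b n
      have := hsat n hn
      rw [h1] at this
      linear_combination this
    -- b is not eventually zero, by minimality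
    have hbne : ∀ M, ∃ m, M ≤ m ∧ b m ≠ 0 := by
      intro M
      by_contra hcon
      push_neg at hcon
      have : T (e₀ - 1) := ⟨q, hqm, hqdeg, M, fun n hn => by
        have := hcon n hn
        simpa [hb] using this⟩
      exact hmin (e₀ - 1) (by omega) this
    obtain ⟨m, hmN, hbm⟩ := hbne N
    have hgeom : ∀ j : ℕ, b (m + j) = lam ^ j * b m := by
      intro j
      induction j with
      | zero => simp
      | succ j ih =>
        have : m + (j+1) = (m+j) + 1 := by omega
        rw [this, hbrec (m+j) (by omega), ih, pow_succ]
        ring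
    set ρ := Complex.abs lam with hρ
    have hρ1 : 1 < ρ := hlam1
    -- upper bound for |b n|
    set Q : ℝ := ∑ i ∈ Finset.range e₀, Complex.abs (q.coeff i) with hQ
    have hQpos : 0 < Q := by
      have h1 : q.coeff (e₀ - 1) = 1 := by
        rw [← hqdeg]; exact hqm.coeff_natDegree
      have h2 : (e₀ - 1) ∈ Finset.range e₀ := Finset.mem_range.mpr (by omega)
      have h3 : Complex.abs (q.coeff (e₀-1)) = 1 := by rw [h1]; simp
      have h4 : (1:ℝ) ≤ Q := by
        rw [hQ]
        have := Finset.single_le_sum (f := fun i => Complex.abs (q.coeff i))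
          (fun i _ => AbsoluteValue.nonneg _ _) h2
        simpa [h1] using this
      linarith
    have hup : ∀ n : ℕ, Complex.abs (b n) ≤ Q * ∑ j ∈ Finset.range e₀, (s (n+j) : ℝ) := by
      intro n
      have hsupp : q.support ⊆ Finset.range e₀ := by
        intro i hi
        rw [Finset.mem_range]
        have := Polynomial.le_natDegree_of_mem_supp i hi
        omega
      have h1 : b n = ∑ i ∈ Finset.range e₀, q.coeff i * (s (n+i) : ℂ) := by
        rw [hb]
        simp only []
        unfold papply
        rw [Polynomial.sum_def]
        exact Finset.sum_subset hsupp (by intro x _ hx; simp [Polynomial.notMem_support_iff.mp hx])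
      rw [h1]
      calc Complex.abs (∑ i ∈ Finset.range e₀, q.coeff i * (s (n+i) : ℂ))
          ≤ ∑ i ∈ Finset.range e₀, Complex.abs (q.coeff i * (s (n+i) : ℂ)) := by
            exact AbsoluteValue.sum_le _ _ _
        _ = ∑ i ∈ Finset.range e₀, Complex.abs (q.coeff i) * (s (n+i) : ℝ) := by
            apply Finset.sum_congr rfl
            intro i _
            rw [map_mul, Complex.abs_natCast]
        _ ≤ ∑ i ∈ Finset.range e₀, Q * (s (n+i) : ℝ) := by
            apply Finset.sum_le_sum
            intro i hi
            apply mul_le_mul_of_nonneg_right _ (by positivity)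
            exact Finset.single_le_sum (f := fun i => Complex.abs (q.coeff i))
              (fun i _ => AbsoluteValue.nonneg _ _) hi
        _ = Q * ∑ j ∈ Finset.range e₀, (s (n+j) : ℝ) := by rw [Finset.mul_sum]
    -- lower bound : |b (m+j)| = ρ^j |b m|
    have hρ0 : (0:ℝ) < ρ := lt_trans one_pos hρ1
    have hQρ : (0:ℝ) < Q * ρ ^ m := mul_pos hQpos (pow_pos hρ0 m)
    set c : ℝ := Complex.abs (b m) / (Q * ρ ^ m) with hc
    have hcpos : 0 < c := div_pos (AbsoluteValue.pos _ hbm) hQρ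
    obtain ⟨n, hnm, hlt⟩ := Hsub ρ hρ1 c hcpos (e₀ - 1) m
    have hrange : e₀ - 1 + 1 = e₀ := by omega
    rw [hrange] at hlt
    -- combine
    have hlow : Complex.abs (b n) = ρ ^ (n - m) * Complex.abs (b m) := by
      have := hgeom (n - m)
      rw [show m + (n - m) = n from by omega] at this
      rw [this, map_mul, map_pow]
    have hsplit : ρ ^ n = ρ ^ (n - m) * ρ ^ m := by
      rw [← pow_add]; congr 1; omega
    have h2 : c * ρ ^ n ≤ ∑ j ∈ Finset.range e₀, (s (n+j) : ℝ) := by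
      have h3 := hup n
      rw [hlow] at h3
      rw [hc, hsplit, div_mul_eq_mul_div, div_le_iff₀ hQρ]
      calc Complex.abs (b m) * (ρ ^ (n - m) * ρ ^ m) = (ρ ^ (n-m) * Complex.abs (b m)) * ρ ^ m := by ring
        _ ≤ (Q * ∑ j ∈ Finset.range e₀, (s (n+j) : ℝ)) * ρ ^ m := by
            apply mul_le_mul_of_nonneg_right h3 (pow_pos hρ0 m).le
        _ = (∑ j ∈ Finset.range e₀, (s (n+j) : ℝ)) * (Q * ρ ^ m) := by ring
    linarith
section Growth

variable (h : ℤ → ℕ)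

/-- The even-indexed subsequence `a k = h(2k)`. -/
def aseq (k : ℕ) : ℕ := h (2*(k:ℤ))

variable (hinit : ∀ n : ℤ, n ≤ 1 → h n = 1)
variable (hrec : ∀ n : ℤ, 2 ≤ n → h n = h (n - (h (n - 1) : ℤ)) + h (n - 2))

include hinit hrec

lemma hodd (k : ℕ) : h (2*(k:ℤ)+1) = k + 1 := (hkey h hinit hrec k).1

lemma aseq_rec (k : ℕ) : aseq h (k+1) = h ((k+1:ℕ):ℤ) + aseq h k := by
  have H := (hkey h hinit hrec (k+1)).2.2 k rfl
  unfold aseq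
  have e1 : (2*((k+1:ℕ):ℤ)) = 2*(((k+1):ℕ):ℤ) := rfl
  exact H

lemma aseq_zero : aseq h 0 = 1 := by
  unfold aseq; simpa using hinit 0 (by norm_num)

lemma aseq_one : aseq h 1 = 2 := by
  rw [aseq_rec h hinit hrec 0, aseq_zero h hinit hrec]
  have : h ((1:ℕ):ℤ) = 1 := hinit 1 (by norm_num)
  simp at this ⊢
  omega

lemma aseq_ge (k : ℕ) : 2*k ≤ aseq h k := (hkey h hinit hrec k).2.1

lemma h_even (m : ℕ) : h ((2*m:ℕ):ℤ) = aseq h m :=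
  congrArg h (by push_cast; ring)

lemma h_odd' (m : ℕ) : h ((2*m+1:ℕ):ℤ) = m + 1 := by
  have H := hodd h hinit hrec m
  have e : ((2*m+1:ℕ):ℤ) = 2*(m:ℤ)+1 := by push_cast; ring
  rw [e]; exact H

lemma h_pos (m : ℕ) : 1 ≤ h ((m:ℕ):ℤ) := by
  rcases Nat.even_or_odd m with ⟨t, ht⟩ | ⟨t, ht⟩
  · rw [show m = 2*t by omega, h_even h hinit hrec]
    rcases Nat.eq_zero_or_pos t with h0 | h0
    · rw [h0, aseq_zero h hinit hrec]
    · have := aseq_ge h hinit hrec t; omega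
  · rw [show m = 2*t+1 by omega, h_odd' h hinit hrec]; omega

lemma aseq_mono : ∀ {k l : ℕ}, k ≤ l → aseq h k ≤ aseq h l := by
  intro k l hkl
  induction l with
  | zero =>
    have : k = 0 := Nat.le_zero.mp hkl
    simp [this]
  | succ l ih =>
    rcases Nat.lt_or_ge k (l+1) with hl | hl
    · have h1 := ih (by omega)
      have h2 := aseq_rec h hinit hrec l
      omega
    · have he : k = l+1 := by omega
      rw [he]

lemma aseq_lb (k : ℕ) : k + 1 ≤ aseq h k := by
  induction k with
  | zero => rw [aseq_zero h hinit hrec]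
  | succ k ih =>
    have h1 := aseq_rec h hinit hrec k
    have h2 := h_pos h hinit hrec (k+1)
    omega

lemma h_le_aseq (m k : ℕ) (hm : m ≤ 2*k) : h ((m:ℕ):ℤ) ≤ aseq h k := by
  rcases Nat.even_or_odd m with ⟨t, ht⟩ | ⟨t, ht⟩
  · rw [show m = 2*t by omega, h_even h hinit hrec]
    exact aseq_mono h hinit hrec (by omega)
  · rw [show m = 2*t+1 by omega, h_odd' h hinit hrec]
    have h1 := aseq_lb h hinit hrec k
    omega

lemma aseq_upper (k : ℕ) (hk : 1 ≤ k) : ∀ j, j ≤ 2*k → aseq h j ≤ 1 + j * aseq h k := by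
  intro j
  induction j with
  | zero => intro _; simp [aseq_zero h hinit hrec]
  | succ j ih =>
    intro hj
    have h1 := aseq_rec h hinit hrec j
    have h2 := h_le_aseq h hinit hrec (j+1) k (by omega)
    have h3 := ih (by omega)
    nlinarith

lemma aseq_double (k : ℕ) (hk : 1 ≤ k) : aseq h (2*k) ≤ 3*k*aseq h k := by
  have h1 := aseq_upper h hinit hrec k hk (2*k) (le_refl _)
  have h2 := aseq_lb h hinit hrec k
  nlinarith

lemma aseq_lower_step (k : ℕ) (hk : 1 ≤ k) :
    ∀ j, j ≤ k → aseq h (2*k) + j * aseq h k ≤ aseq h (2*(k+j)) := by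
  intro j
  induction j with
  | zero => intro _; simp
  | succ j ih =>
    intro hj
    have h1 : aseq h (2*(k+j)+1) = h ((2*(k+j)+1:ℕ):ℤ) + aseq h (2*(k+j)) := by
      have := aseq_rec h hinit hrec (2*(k+j))
      convert this using 3
    have h2 : aseq h (2*(k+j)+2) = h ((2*(k+j)+2:ℕ):ℤ) + aseq h (2*(k+j)+1) := by
      have := aseq_rec h hinit hrec (2*(k+j)+1)
      convert this using 3 <;> omega
    have h3 : h ((2*(k+j)+2:ℕ):ℤ) = aseq h (k+j+1) := by
      rw [show 2*(k+j)+2 = 2*(k+j+1) by omega, h_even h hinit hrec]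
    have h4 : aseq h k ≤ aseq h (k+j+1) := aseq_mono h hinit hrec (by omega)
    have h5 := ih (by omega)
    have h6 : 2*(k + (j+1)) = 2*(k+j)+2 := by omega
    rw [h6]
    have h7 : 1 ≤ h ((2*(k+j)+1:ℕ):ℤ) := h_pos h hinit hrec _
    nlinarith

lemma aseq_quad (k : ℕ) (hk : 1 ≤ k) : k * aseq h k ≤ aseq h (4*k) := by
  have h1 := aseq_lower_step h hinit hrec k hk k (le_refl _)
  have h2 : 2*(k+k) = 4*k := by omega
  rw [h2] at h1
  omega

lemma aseq_pow_upper : ∀ t : ℕ, aseq h (2^t) ≤ 2^(t*t+2) := by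
  intro t
  induction t with
  | zero =>
    rw [pow_zero, aseq_one h hinit hrec]; norm_num
  | succ t ih =>
    rcases Nat.eq_zero_or_pos t with h0 | h0
    · subst h0
      have e : (2:ℕ)^(0+1) = 2*1 := by norm_num
      rw [e]
      have h2 := aseq_double h hinit hrec 1 le_rfl
      rw [aseq_one h hinit hrec] at h2
      have e2 : (2:ℕ)^((0+1)*(0+1)+2) = 8 := by norm_num
      omega
    · have h1 : (2:ℕ)^(t+1) = 2*2^t := by rw [pow_succ]; ring
      rw [h1]
      have h2 := aseq_double h hinit hrec (2^t) (Nat.one_le_two_pow)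
      have h3 : 3*2^t*aseq h (2^t) ≤ 3*2^t*2^(t*t+2) := by
        exact Nat.mul_le_mul_left _ ih
      have h4 : 3*2^t*2^(t*t+2) ≤ 2^((t+1)*(t+1)+2) := by
        have e2 : (3:ℕ)*2^t ≤ 2^(2*t+1) := by
          have h2t : 2 ≤ (2:ℕ)^t := by
            calc 2 = 2^1 := by norm_num
              _ ≤ 2^t := Nat.pow_le_pow_right (by norm_num) h0
          have e3 : (2:ℕ)^(2*t+1) = 2^t*2^t*2 := by
            rw [two_mul, pow_add, pow_add, pow_one]
          rw [e3]; nlinarith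
        calc 3*2^t*2^(t*t+2) ≤ 2^(2*t+1)*2^(t*t+2) :=
              Nat.mul_le_mul_right _ e2
          _ = 2^((t+1)*(t+1)+2) := by rw [← pow_add]; congr 1; ring
      omega

lemma aseq_pow_lower : ∀ t : ℕ, 2^(t*t+t) ≤ aseq h (4^(t+1)) := by
  intro t
  induction t with
  | zero =>
    calc 2^(0*0+0) = 1 := by norm_num
      _ ≤ aseq h (4^(0+1)) := by
          have := aseq_lb h hinit hrec (4^(0+1))
          omega
  | succ t ih =>
    have h1 : (4:ℕ)^(t+2) = 4*4^(t+1) := by ring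
    rw [h1]
    have h2 := aseq_quad h hinit hrec (4^(t+1)) (Nat.one_le_pow _ _ (by norm_num))
    have h3 : 4^(t+1) * 2^(t*t+t) ≤ 4^(t+1) * aseq h (4^(t+1)) :=
      Nat.mul_le_mul_left _ ih
    have h4 : (4:ℕ)^(t+1) * 2^(t*t+t) = 2^((t+1)*(t+1)+(t+1)) := by
      have e1 : (4:ℕ)^(t+1) = 2^(2*(t+1)) := by
        rw [pow_mul]; norm_num
      rw [e1, ← pow_add]
      congr 1
      ring
    calc 2^((t+1)*(t+1)+(t+1)) = 4^(t+1) * 2^(t*t+t) := h4.symm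
      _ ≤ 4^(t+1) * aseq h (4^(t+1)) := h3
      _ ≤ aseq h (4*4^(t+1)) := h2

end Growth
lemma nat_sq_le_two_pow : ∀ v : ℕ, 4 ≤ v → v*v ≤ 2^v := by
  intro v hv
  induction v, hv using Nat.le_induction with
  | base => norm_num
  | succ v hv ih =>
    have h2 : 2*v+1 ≤ v*v := by nlinarith
    have h3 : (2:ℕ)^(v+1) = 2*2^v := by rw [pow_succ]; ring
    nlinarith

lemma two_pow_mono_real {a b : ℕ} (hab : a ≤ b) : (2:ℝ)^a ≤ (2:ℝ)^b :=
  pow_le_pow_right₀ (by norm_num) hab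

section GrowthReal

variable (h : ℤ → ℕ)
variable (hinit : ∀ n : ℤ, n ≤ 1 → h n = 1)
variable (hrec : ∀ n : ℤ, 2 ≤ n → h n = h (n - (h (n - 1) : ℤ)) + h (n - 2))

lemma super_aux (C : ℝ) (K N₀ : ℕ) :
    ∃ t : ℕ, N₀ ≤ 4^(t+1) ∧ C * (((2*4^(t+1) : ℕ):ℝ)+1)^K < (2:ℝ)^(t*t+t) := by
  obtain ⟨L, hL⟩ := pow_unbounded_of_one_lt (y := (2:ℝ)) C (by norm_num)
  refine ⟨2*K + L + N₀ + 4, ?_, ?_⟩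
  · have h1 : N₀ ≤ 2*K + L + N₀ + 4 := by omega
    have h2 : (2*K + L + N₀ + 4) < 2^(2*K + L + N₀ + 4) := (Nat.lt_two_pow_self (n := _))
    have h3 : (2:ℕ)^(2*K + L + N₀ + 4) ≤ 4^(2*K + L + N₀ + 4 + 1) := by
      calc (2:ℕ)^(2*K + L + N₀ + 4) ≤ 4^(2*K + L + N₀ + 4) :=
            Nat.pow_le_pow_left (by norm_num) _
        _ ≤ 4^(2*K + L + N₀ + 4 + 1) := Nat.pow_le_pow_right (by norm_num) (by omega)
    omega
  · set t := 2*K + L + N₀ + 4 with ht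
    have hX : (((2*4^(t+1) : ℕ):ℝ)+1) ≤ (2:ℝ)^(2*t+4) := by
      have hnat : 2*4^(t+1) + 1 ≤ 2^(2*t+4) := by
        have e1 : (4:ℕ)^(t+1) = 2^(2*t+2) := by
          rw [show (4:ℕ) = 2^2 by norm_num, ← pow_mul, show 2*(t+1) = 2*t+2 by ring]
        have e2 : (2:ℕ)^(2*t+4) = 2*2^(2*t+2) + 2^(2*t+3) := by
          rw [pow_succ, pow_succ]; ring
        have e3 : 1 ≤ (2:ℕ)^(2*t+3) := Nat.one_le_two_pow
        omega
      calc (((2*4^(t+1) : ℕ):ℝ)+1) = ((2*4^(t+1) + 1 : ℕ):ℝ) := by push_cast; ring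
        _ ≤ ((2^(2*t+4) : ℕ):ℝ) := by exact_mod_cast hnat
        _ = (2:ℝ)^(2*t+4) := by push_cast [Nat.cast_pow]; ring
    have hX0 : (0:ℝ) ≤ (((2*4^(t+1) : ℕ):ℝ)+1) := by positivity
    have hexp : L + (2*t+4)*K < t*t + t := by nlinarith [ht]
    calc C * (((2*4^(t+1) : ℕ):ℝ)+1)^K
        ≤ (2:ℝ)^L * (((2*4^(t+1) : ℕ):ℝ)+1)^K := by
          apply mul_le_mul_of_nonneg_right hL.le (by positivity)
      _ ≤ (2:ℝ)^L * ((2:ℝ)^(2*t+4))^K := by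
          apply mul_le_mul_of_nonneg_left _ (by positivity)
          exact pow_le_pow_left₀ hX0 hX K
      _ = (2:ℝ)^(L + (2*t+4)*K) := by rw [← pow_mul, ← pow_add]
      _ < (2:ℝ)^(t*t+t) := by
          apply pow_lt_pow_right₀ (by norm_num) hexp

include hinit hrec

lemma hsuper_a : ∀ (C : ℝ) (K N₀ : ℕ), ∃ n, N₀ ≤ n ∧ C * ((n:ℝ)+1)^K < (aseq h n : ℝ) := by
  intro C K N₀
  rcases le_or_gt C 0 with hC | hC
  · refine ⟨N₀, le_refl _, ?_⟩
    have h1 : (0:ℝ) < ((N₀:ℝ)+1)^K := by positivity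
    have h2 : 1 ≤ aseq h N₀ := by have := aseq_lb h hinit hrec N₀; omega
    have h3 : (1:ℝ) ≤ (aseq h N₀ : ℝ) := by exact_mod_cast h2
    nlinarith
  · obtain ⟨t, htN, hlt⟩ := super_aux C K N₀
    refine ⟨4^(t+1), htN, ?_⟩
    have h1 : (2:ℝ)^(t*t+t) ≤ (aseq h (4^(t+1)) : ℝ) := by
      exact_mod_cast aseq_pow_lower h hinit hrec t
    have h2 : C * (((4^(t+1) : ℕ):ℝ)+1)^K ≤ C * (((2*4^(t+1) : ℕ):ℝ)+1)^K := by
      apply mul_le_mul_of_nonneg_left _ hC.le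
      apply pow_le_pow_left₀ (by positivity)
      push_cast
      nlinarith [pow_pos (show (0:ℝ) < 4 by norm_num) (t+1)]
    calc C * (((4^(t+1) : ℕ):ℝ)+1)^K ≤ C * (((2*4^(t+1) : ℕ):ℝ)+1)^K := h2
      _ < (2:ℝ)^(t*t+t) := hlt
      _ ≤ _ := h1

lemma hsuper_h : ∀ (C : ℝ) (K N₀ : ℕ), ∃ n, N₀ ≤ n ∧
    C * ((n:ℝ)+1)^K < (h ((n:ℕ):ℤ) : ℝ) := by
  intro C K N₀
  rcases le_or_gt C 0 with hC | hC
  · refine ⟨N₀, le_refl _, ?_⟩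
    have h1 : (0:ℝ) < ((N₀:ℝ)+1)^K := by positivity
    have h2 : 1 ≤ h ((N₀:ℕ):ℤ) := h_pos h hinit hrec N₀
    have h3 : (1:ℝ) ≤ (h ((N₀:ℕ):ℤ) : ℝ) := by exact_mod_cast h2
    nlinarith
  · obtain ⟨t, htN, hlt⟩ := super_aux C K N₀
    refine ⟨2*4^(t+1), by omega, ?_⟩
    have he : h ((2*4^(t+1):ℕ):ℤ) = aseq h (4^(t+1)) := h_even h hinit hrec _
    have h1 : (2:ℝ)^(t*t+t) ≤ (aseq h (4^(t+1)) : ℝ) := by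
      exact_mod_cast aseq_pow_lower h hinit hrec t
    rw [he]
    exact lt_of_lt_of_le hlt h1

lemma hsub_gen (s : ℕ → ℕ) (hs : ∀ m, s m ≤ aseq h m) :
    ∀ ρ : ℝ, 1 < ρ → ∀ c : ℝ, 0 < c → ∀ e N₀ : ℕ, ∃ n, N₀ ≤ n ∧
      (∑ j ∈ Finset.range (e+1), (s (n+j) : ℝ)) < c * ρ^n := by
  intro ρ hρ c hc e N₀
  have hρ0 : (0:ℝ) < ρ := lt_trans one_pos hρ
  obtain ⟨s₀, hs₀⟩ := pow_unbounded_of_one_lt (y := ρ) 4 hρ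
  have h4 : (4:ℝ) ≤ ρ^(2^s₀) :=
    le_trans hs₀.le (pow_le_pow_right₀ hρ.le (Nat.lt_two_pow_self (n := s₀)).le)
  obtain ⟨L, hL⟩ := pow_unbounded_of_one_lt (y := (2:ℝ)) ((e+1:ℝ)*ρ^e*4/c) (by norm_num)
  set u := 3*s₀ + L + e + N₀ + 8 with hu
  set t := u + s₀ with htdef
  have htle : e + N₀ + 1 ≤ 2^t := by
    have h1 : t < 2^t := Nat.lt_two_pow_self (n := t)
    omega
  set n := 2^t - e with hn
  have hne : n + e = 2^t := by omega
  refine ⟨n, by omega, ?_⟩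
  -- sum bound
  have hsum : (∑ j ∈ Finset.range (e+1), (s (n+j) : ℝ))
      ≤ ((e+1 : ℕ):ℝ) * ((2:ℝ)^(t*t+2)) := by
    have hone : ∀ j ∈ Finset.range (e+1), (s (n+j) : ℝ) ≤ (2:ℝ)^(t*t+2) := by
      intro j hj
      rw [Finset.mem_range] at hj
      have h1 : s (n+j) ≤ aseq h (n+j) := hs _
      have h2 : aseq h (n+j) ≤ aseq h (2^t) := by
        apply aseq_mono h hinit hrec
        omega
      have h3 : aseq h (2^t) ≤ 2^(t*t+2) := aseq_pow_upper h hinit hrec t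
      have : (s (n+j) : ℝ) ≤ ((2^(t*t+2) : ℕ) : ℝ) := by exact_mod_cast le_trans h1 (le_trans h2 h3)
      calc (s (n+j) : ℝ) ≤ ((2^(t*t+2) : ℕ) : ℝ) := this
        _ = (2:ℝ)^(t*t+2) := by push_cast [Nat.cast_pow]; ring
    calc (∑ j ∈ Finset.range (e+1), (s (n+j) : ℝ))
        ≤ ∑ j ∈ Finset.range (e+1), (2:ℝ)^(t*t+2) := Finset.sum_le_sum hone
      _ = ((e+1 : ℕ):ℝ) * ((2:ℝ)^(t*t+2)) := by
          rw [Finset.sum_const, Finset.card_range]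
          push_cast; ring
  -- exponential lower bound
  have hexp : (2:ℝ)^(2^(u+1)) ≤ ρ^(2^t) := by
    have e1 : (2:ℕ)^t = 2^s₀ * 2^u := by rw [htdef, pow_add]; ring
    have e2 : ρ^(2^t) = (ρ^(2^s₀))^(2^u) := by rw [e1, pow_mul]
    have e3 : (2:ℝ)^(2^(u+1)) = (4:ℝ)^(2^u) := by
      rw [show (4:ℝ) = 2^2 by norm_num, ← pow_mul]
      congr 1
      rw [pow_succ]; ring
    rw [e2, e3]
    exact pow_le_pow_left₀ (by norm_num) h4 _
  have hnat : L + (t*t+2) + 2 ≤ 2^(u+1) := by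
    have h1 : u*u ≤ 2^u := nat_sq_le_two_pow u (by omega)
    have h2 : (2:ℕ)^(u+1) = 2*2^u := by rw [pow_succ]; ring
    have h3 : L + ((u+s₀)*(u+s₀)+2) + 2 ≤ 2*(u*u) := by nlinarith
    calc L + (t*t+2) + 2 = L + ((u+s₀)*(u+s₀)+2) + 2 := by rw [htdef]
      _ ≤ 2*(u*u) := h3
      _ ≤ 2*2^u := by omega
      _ = 2^(u+1) := h2.symm
  -- combine
  have hρe : (0:ℝ) < ρ^e := pow_pos hρ0 e
  have key : (∑ j ∈ Finset.range (e+1), (s (n+j) : ℝ)) * ρ^e < (c * ρ^n) * ρ^e := by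
    have hr : (c * ρ^n) * ρ^e = c * ρ^(2^t) := by
      rw [mul_assoc, ← pow_add, hne]
    rw [hr]
    have step1 : (∑ j ∈ Finset.range (e+1), (s (n+j) : ℝ)) * ρ^e
        ≤ ((e+1 : ℕ):ℝ) * ((2:ℝ)^(t*t+2)) * ρ^e := by
      apply mul_le_mul_of_nonneg_right hsum hρe.le
    have step2 : ((e+1 : ℕ):ℝ) * ((2:ℝ)^(t*t+2)) * ρ^e < c * (2:ℝ)^(L + (t*t)) := by
      have e4 : ((e+1 : ℕ):ℝ) * ((2:ℝ)^(t*t+2)) * ρ^e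
          = ((e+1:ℝ)*ρ^e*4) * (2:ℝ)^(t*t) := by
        rw [pow_add]
        push_cast
        ring
      rw [e4]
      have h5 : (e+1:ℝ)*ρ^e*4 < c * 2^L := by
        rw [div_lt_iff₀ hc] at hL
        linarith [hL]
      calc ((e+1:ℝ)*ρ^e*4) * (2:ℝ)^(t*t) < (c * 2^L) * (2:ℝ)^(t*t) := by
            apply mul_lt_mul_of_pos_right h5 (by positivity)
        _ = c * (2:ℝ)^(L + t*t) := by rw [mul_assoc, ← pow_add]
    have step3 : c * (2:ℝ)^(L + t*t) ≤ c * ρ^(2^t) := by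
      apply mul_le_mul_of_nonneg_left _ hc.le
      calc (2:ℝ)^(L + t*t) ≤ (2:ℝ)^(2^(u+1)) := two_pow_mono_real (by omega)
        _ ≤ ρ^(2^t) := hexp
    calc (∑ j ∈ Finset.range (e+1), (s (n+j) : ℝ)) * ρ^e
        ≤ ((e+1 : ℕ):ℝ) * ((2:ℝ)^(t*t+2)) * ρ^e := step1
      _ < c * (2:ℝ)^(L + t*t) := step2
      _ ≤ c * ρ^(2^t) := step3
  exact lt_of_mul_lt_mul_right key hρe.le

end GrowthReal
open Polynomial in
lemma build_poly (s : ℕ → ℕ) (d : ℕ) (hd : 1 ≤ d) (c : ℕ → ℚ) (N : ℕ)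
    (hr : ∀ n, N ≤ n → ((s (n+d) : ℂ)
      = ∑ i ∈ Finset.Icc 1 d, (c i : ℂ) * (s (n + (d - i)) : ℂ))) :
    ∃ p : Polynomial ℂ, p.Monic ∧ 1 ≤ p.natDegree ∧
      ∃ N', Sat p (fun m => (s m : ℂ)) N' := by
  classical
  set r : Polynomial ℂ := ∑ i ∈ Finset.Icc 1 d, Polynomial.C (c i : ℂ) * Polynomial.X^(d - i)
    with hrdef
  have hrdeg : r.degree ≤ ((d-1 : ℕ) : WithBot ℕ) := by
    apply (Polynomial.degree_sum_le _ _).trans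
    apply Finset.sup_le
    intro i hi
    obtain ⟨hi1, hi2⟩ := Finset.mem_Icc.mp hi
    apply (Polynomial.degree_C_mul_X_pow_le _ _).trans
    exact_mod_cast Nat.cast_le.mpr (by omega : d - i ≤ d - 1)
  have hrlt : r.degree < ((d : ℕ) : WithBot ℕ) := by
    apply lt_of_le_of_lt hrdeg
    exact_mod_cast (by omega : d - 1 < d)
  have hm : (Polynomial.X^d - r).Monic := Polynomial.monic_X_pow_sub hrlt
  have hrdeg' : r.degree < (Polynomial.X^d : Polynomial ℂ).degree := by
    rw [Polynomial.degree_X_pow]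
    exact hrlt
  have hdeg : (Polynomial.X^d - r).natDegree = d := by
    have h1 : (Polynomial.X^d - r).degree = (d : WithBot ℕ) := by
      rw [Polynomial.degree_sub_eq_left_of_degree_lt hrdeg', Polynomial.degree_X_pow]
    exact Polynomial.natDegree_eq_of_degree_eq_some h1
  refine ⟨Polynomial.X^d - r, hm, by omega, N, ?_⟩
  intro n hn
  have hpap : papply (Polynomial.X^d - r) (fun m => (s m : ℂ)) n
      = (s (n+d) : ℂ) - ∑ i ∈ Finset.Icc 1 d, (c i : ℂ) * (s (n + (d - i)) : ℂ) := by
    rw [papply_sub, papply_X_pow, hrdef, papply_sum]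
    congr 1
    apply Finset.sum_congr rfl
    intro i _
    rw [papply_C_mul, papply_X_pow]
  rw [hpap, hr n hn, sub_self]

/-- Neither `(h(n))_{n∈ℕ}` nor `(h(2n))_{n∈ℕ}` satisfies a linear
recurrence with rational constant coefficients (valid from some index `N` on),
where `h = h_{1,1}`. -/
theorem stmt7 (h : ℤ → ℕ)
    (hinit : ∀ n : ℤ, n ≤ 1 → h n = 1)
    (hrec : ∀ n : ℤ, 2 ≤ n → h n = h (n - (h (n - 1) : ℤ)) + h (n - 2)) :
    (¬ ∃ (d : ℕ), 1 ≤ d ∧ ∃ (c : ℕ → ℚ) (N : ℕ), ∀ n : ℕ, N ≤ n →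
      (h ((n + d : ℕ) : ℤ) : ℚ) =
        ∑ i ∈ Finset.Icc 1 d, c i * (h ((n + d - i : ℕ) : ℤ) : ℚ)) ∧
    (¬ ∃ (d : ℕ), 1 ≤ d ∧ ∃ (c : ℕ → ℚ) (N : ℕ), ∀ n : ℕ, N ≤ n →
      (h ((2 * (n + d) : ℕ) : ℤ) : ℚ) =
        ∑ i ∈ Finset.Icc 1 d, c i * (h ((2 * (n + d - i) : ℕ) : ℤ) : ℚ)) := by
  constructor
  · -- full sequence
    rintro ⟨d, hd, c, N, hcrec⟩
    apply core_no_lr (fun m => h ((m:ℕ):ℤ))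
      (hsuper_h h hinit hrec)
      (hsub_gen h hinit hrec _ (fun m => h_le_aseq h hinit hrec m m (by omega)))
    apply build_poly _ d hd c N
    intro n hn
    have H := hcrec n hn
    have H' : (h ((n+d:ℕ):ℤ) : ℚ) = ∑ i ∈ Finset.Icc 1 d, c i * (h ((n+(d-i):ℕ):ℤ) : ℚ) := by
      rw [H]
      apply Finset.sum_congr rfl
      intro i hi
      obtain ⟨hi1, hi2⟩ := Finset.mem_Icc.mp hi
      rw [show n + d - i = n + (d-i) by omega]
    exact_mod_cast H'
  · -- even subsequence
    rintro ⟨d, hd, c, N, hcrec⟩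
    apply core_no_lr (aseq h)
      (hsuper_a h hinit hrec)
      (hsub_gen h hinit hrec _ (fun m => le_refl _))
    apply build_poly _ d hd c N
    intro n hn
    have H := hcrec n hn
    rw [h_even h hinit hrec (n+d)] at H
    have hsum : ∑ i ∈ Finset.Icc 1 d, c i * (h ((2*(n + d - i) : ℕ) : ℤ) : ℚ)
        = ∑ i ∈ Finset.Icc 1 d, c i * (aseq h (n+(d-i)) : ℚ) := by
      apply Finset.sum_congr rfl
      intro i hi
      obtain ⟨hi1, hi2⟩ := Finset.mem_Icc.mp hi
      rw [show 2*(n + d - i) = 2*(n + (d-i)) by omega, h_even h hinit hrec]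
    rw [hsum] at H
    exact_mod_cast H
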